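/- arXiv:2501.14874 — 2 statements merged into one kernel-verified Lean document; each statement's English description precedes it below -/
import Mathlib

section
/- Let $\{Z_n\}_n$ be a sequence of complex matrices with $Z_n$ of size $sn \times tn$ for fixed positive integers $s,t$, and suppose for every $n$ one can write $Z_n = R_n + N_n$ where $\mathrm{rank}(R_n)/n \to 0$ and $\|N_n\| \to 0$ (spectral norm) as $n \to \infty$. Then for every continuous compactly supported function $F: \mathbb{R} \to \mathbb{C}$, with $r = \min\{s,t\}$, $\lim_{n\to\infty} \frac{1}{rn} \sum_{i=1}^{rn} F(\sigma_i(Z_n)) = F(0)$, i.e. $\{Z_n\}_n$ is zero-distributed in the sense of singular values. -/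
open Filter Finset Matrix Topology MeasureTheory

/-- The (unsorted) singular values of a complex matrix: square roots of the
eigenvalues of `Aᴴ * A`. -/
noncomputable def svals {m n : Type*} [Fintype m] [Fintype n] [DecidableEq n]
    (A : Matrix m n ℂ) (i : n) : ℝ :=
  Real.sqrt ((Matrix.isHermitian_conjTranspose_mul_self A).eigenvalues i)

/-- Singular values of a `Fin p × Fin q`-indexed complex matrix, arranged in
non-increasing order and indexed by `ℕ` (zero for indices `≥ q`); so
`svalFun A 0` is the largest singular value `σ₁(A)`. -/
noncomputable def svalFun {p q : ℕ} (A : Matrix (Fin p) (Fin q) ℂ) (j : ℕ) : ℝ :=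
  if h : j < q then svals A (Tuple.sort (svals A) ((⟨j, h⟩ : Fin q).rev)) else 0

/-- The spectral norm of a complex matrix: its largest singular value. -/
noncomputable def specNorm {m n : Type*} [Fintype m] [Fintype n] [DecidableEq n]
    (A : Matrix m n ℂ) : ℝ :=
  ⨆ i, svals A i

section Aux

lemma svals_nonneg {m n : Type*} [Fintype m] [Fintype n] [DecidableEq n]
    (A : Matrix m n ℂ) (i : n) : 0 ≤ svals A i := Real.sqrt_nonneg _

lemma svalFun_nonneg {p q : ℕ} (A : Matrix (Fin p) (Fin q) ℂ) (j : ℕ) :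
    0 ≤ svalFun A j := by
  rw [svalFun]; split
  · exact Real.sqrt_nonneg _
  · exact le_refl 0

lemma svals_le_specNorm {m n : Type*} [Fintype m] [Fintype n] [DecidableEq n]
    (A : Matrix m n ℂ) (i : n) : svals A i ≤ specNorm A :=
  le_ciSup (Set.Finite.bddAbove (Set.finite_range _)) i

lemma sq_svals {m n : Type*} [Fintype m] [Fintype n] [DecidableEq n]
    (A : Matrix m n ℂ) (i : n) :
    svals A i ^ 2 = (Matrix.isHermitian_conjTranspose_mul_self A).eigenvalues i :=
  Real.sq_sqrt (Matrix.eigenvalues_conjTranspose_mul_self_nonneg A i)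

lemma dot_star_mulVec {m n : Type*} [Fintype m] [Fintype n] (A : Matrix m n ℂ)
    (v w : n → ℂ) :
    star (A *ᵥ v) ⬝ᵥ (A *ᵥ w) = star v ⬝ᵥ ((Aᴴ * A) *ᵥ w) := by
  rw [star_mulVec, dotProduct_mulVec, dotProduct_mulVec, vecMul_vecMul]

lemma dot_self_re {n : Type*} [Fintype n] (x : n → ℂ) :
    (star x ⬝ᵥ x).re = ∑ i, Complex.normSq (x i) := by
  rw [dotProduct, Complex.re_sum]
  refine Finset.sum_congr rfl fun i _ => ?_
  simp only [Pi.star_apply]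
  rw [show (star (x i)) * x i = x i * star (x i) from mul_comm _ _]
  rw [show (star (x i)) = (starRingEnd ℂ) (x i) from rfl, Complex.mul_conj]
  simp

lemma herm_qf {k : Type*} [Fintype k] [DecidableEq k] {M : Matrix k k ℂ}
    (hM : M.IsHermitian) (x : k → ℂ) :
    (star x ⬝ᵥ (M *ᵥ x)).re
      = ∑ i, hM.eigenvalues i *
          Complex.normSq ((star (hM.eigenvectorUnitary : Matrix k k ℂ) *ᵥ x) i) := by
  set U := (hM.eigenvectorUnitary : Matrix k k ℂ) with hU
  set y := star U *ᵥ x with hy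
  have key : star x ⬝ᵥ (M *ᵥ x)
      = star y ⬝ᵥ (Matrix.diagonal (RCLike.ofReal ∘ hM.eigenvalues) *ᵥ y) := by
    conv_lhs => rw [hM.spectral_theorem, Unitary.conjStarAlgAut_apply]
    rw [← mulVec_mulVec, ← mulVec_mulVec, dotProduct_mulVec]
    rw [hy, star_mulVec]
    congr 1
    rw [Matrix.star_eq_conjTranspose, conjTranspose_conjTranspose]
  rw [key, dotProduct, Complex.re_sum]
  refine Finset.sum_congr rfl fun i _ => ?_
  rw [mulVec_diagonal]
  simp only [Pi.star_apply, Function.comp_apply]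
  have hcoe : (RCLike.ofReal (hM.eigenvalues i) : ℂ) = ((hM.eigenvalues i : ℝ) : ℂ) := rfl
  rw [hcoe]
  have h1 : star (y i) * (((hM.eigenvalues i : ℝ) : ℂ) * y i)
      = ((hM.eigenvalues i : ℝ) : ℂ) * (y i * (starRingEnd ℂ) (y i)) := by
    rw [show (star (y i)) = (starRingEnd ℂ) (y i) from rfl]; ring
  rw [h1, Complex.mul_conj, ← Complex.ofReal_mul, Complex.ofReal_re]

lemma dot_self_unitary {k : Type*} [Fintype k] [DecidableEq k]
    (U : Matrix.unitaryGroup k ℂ) (v : k → ℂ) :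
    star ((U : Matrix k k ℂ) *ᵥ v) ⬝ᵥ ((U : Matrix k k ℂ) *ᵥ v) = star v ⬝ᵥ v := by
  rw [dot_star_mulVec, ← Matrix.star_eq_conjTranspose,
    Matrix.mem_unitaryGroup_iff'.mp U.2, one_mulVec]

lemma qf_le_of_svals_le {m n : Type*} [Fintype m] [Fintype n] [DecidableEq n]
    (A : Matrix m n ℂ) {ε : ℝ} (h : ∀ i, svals A i ≤ ε) (x : n → ℂ) :
    (star x ⬝ᵥ ((Aᴴ * A) *ᵥ x)).re ≤ ε ^ 2 * (star x ⬝ᵥ x).re := by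
  have hM := Matrix.isHermitian_conjTranspose_mul_self A
  set U := hM.eigenvectorUnitary with hU
  set y := star (U : Matrix n n ℂ) *ᵥ x with hy
  have hx : x = (U : Matrix n n ℂ) *ᵥ y := by
    rw [hy, mulVec_mulVec, Matrix.mem_unitaryGroup_iff.mp U.2, one_mulVec]
  have h2 : (star x ⬝ᵥ x).re = ∑ i, Complex.normSq (y i) := by
    conv_lhs => rw [hx]
    rw [dot_self_unitary, dot_self_re]
  rw [herm_qf hM, h2, Finset.mul_sum]
  refine Finset.sum_le_sum fun i _ => ?_
  have h3 : hM.eigenvalues i ≤ ε ^ 2 := by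
    rw [← sq_svals A i]
    exact pow_le_pow_left₀ (svals_nonneg A i) (h i) 2
  exact mul_le_mul_of_nonneg_right h3 (Complex.normSq_nonneg _)

/-- Key counting lemma: the number of singular values of `Z = R + N` exceeding
a bound on the singular values of `N` is at most the rank of `R`. -/
lemma card_lt_le_rank {p q : ℕ} (Z R N : Matrix (Fin p) (Fin q) ℂ)
    (hZ : Z = R + N) {ε : ℝ} (hε : 0 ≤ ε) (hN : ∀ i, svals N i ≤ ε) :
    (Finset.univ.filter fun i : Fin q => ε < svals Z i).card ≤ R.rank := by
  by_contra hcon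
  push_neg at hcon
  have hM := Matrix.isHermitian_conjTranspose_mul_self Z
  set U := (hM.eigenvectorUnitary : Matrix (Fin q) (Fin q) ℂ) with hU
  set S := (Finset.univ.filter fun i : Fin q => ε < svals Z i) with hS
  set E : Matrix (Fin q) {i // i ∈ S} ℂ :=
    Matrix.of (fun i j => if i = (j : Fin q) then 1 else 0) with hE
  set A' := R * (U * E) with hA'
  -- nontrivial kernel of A'
  have hrank : A'.rank < Fintype.card {i // i ∈ S} := by
    rw [Fintype.card_coe]
    exact lt_of_le_of_lt (Matrix.rank_mul_le_left _ _) hcon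
  obtain ⟨c, hcmem, hc0⟩ : ∃ c, c ∈ LinearMap.ker A'.mulVecLin ∧ c ≠ 0 := by
    apply Submodule.exists_mem_ne_zero_of_ne_bot
    intro hbot
    have := LinearMap.finrank_range_add_finrank_ker A'.mulVecLin
    rw [hbot, finrank_bot, add_zero, Module.finrank_fintype_fun_eq_card] at this
    rw [Matrix.rank] at hrank
    omega
  have hcker : A' *ᵥ c = 0 := hcmem
  set c' := E *ᵥ c with hc'
  set x := U *ᵥ c' with hx
  have hc'spec : ∀ i, c' i = if h : i ∈ S then c ⟨i, h⟩ else 0 := by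
    intro i
    rw [hc']
    show (∑ j, E i j * c j) = _
    split
    · next h =>
      rw [Finset.sum_eq_single (⟨i, h⟩ : {i // i ∈ S})]
      · simp [hE]
      · intro j _ hji
        have : i ≠ (j : Fin q) := by
          intro hij
          exact hji (Subtype.ext hij.symm)
        simp [hE, this]
      · simp
    · next h =>
      apply Finset.sum_eq_zero
      intro j _
      have : i ≠ (j : Fin q) := fun hij => h (hij ▸ j.2)
      simp [hE, this]
  have hrepr : star U *ᵥ x = c' := by
    rw [hx, mulVec_mulVec, Matrix.mem_unitaryGroup_iff'.mp hM.eigenvectorUnitary.2,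
      one_mulVec]
  have hT : (star x ⬝ᵥ x).re = ∑ i, Complex.normSq (c' i) := by
    rw [hx, dot_self_unitary hM.eigenvectorUnitary, dot_self_re]
  have hQ : (star x ⬝ᵥ ((Zᴴ * Z) *ᵥ x)).re
      = ∑ i, hM.eigenvalues i * Complex.normSq (c' i) := by
    rw [herm_qf hM, hrepr]
  have hRx : R *ᵥ x = 0 := by
    rw [hx, hc', mulVec_mulVec, mulVec_mulVec, Matrix.mul_assoc]
    exact hcker
  have hZx : Z *ᵥ x = N *ᵥ x := by
    rw [hZ, add_mulVec, hRx, zero_add]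
  -- lower bound
  have hlow : ε ^ 2 * (∑ i, Complex.normSq (c' i))
      < ∑ i, hM.eigenvalues i * Complex.normSq (c' i) := by
    rw [Finset.mul_sum]
    obtain ⟨j0, hj0⟩ := Function.ne_iff.mp hc0
    refine Finset.sum_lt_sum (fun i _ => ?_) ⟨(j0 : Fin q), Finset.mem_univ _, ?_⟩
    · by_cases h : i ∈ S
      · have h1 : ε < svals Z i := (Finset.mem_filter.mp h).2
        have h2 : ε ^ 2 < hM.eigenvalues i := by
          rw [← sq_svals Z i]
          exact pow_lt_pow_left₀ h1 hε two_ne_zero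
        exact mul_le_mul_of_nonneg_right h2.le (Complex.normSq_nonneg _)
      · rw [hc'spec i, dif_neg h]
        simp
    · have hmem : (j0 : Fin q) ∈ S := j0.2
      have h1 : ε < svals Z (j0 : Fin q) := (Finset.mem_filter.mp hmem).2
      have h2 : ε ^ 2 < hM.eigenvalues (j0 : Fin q) := by
        rw [← sq_svals Z _]
        exact pow_lt_pow_left₀ h1 hε two_ne_zero
      have h3 : 0 < Complex.normSq (c' (j0 : Fin q)) := by
        rw [Complex.normSq_pos, hc'spec _, dif_pos j0.2]
        simpa using hj0
      exact mul_lt_mul_of_pos_right h2 h3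
  -- upper bound
  have hup : (star x ⬝ᵥ ((Zᴴ * Z) *ᵥ x)).re ≤ ε ^ 2 * (star x ⬝ᵥ x).re := by
    have h1 : star x ⬝ᵥ ((Zᴴ * Z) *ᵥ x) = star x ⬝ᵥ ((Nᴴ * N) *ᵥ x) := by
      rw [← dot_star_mulVec, ← dot_star_mulVec, hZx]
    rw [h1]
    exact qf_le_of_svals_le N hN x
  rw [hQ, hT] at hup
  linarith

lemma card_svalFun_le {p q : ℕ} (A : Matrix (Fin p) (Fin q) ℂ) (ε : ℝ) {m : ℕ}
    (hm : m ≤ q) :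
    ((Finset.range m).filter fun j => ε < svalFun A j).card
      ≤ (Finset.univ.filter fun i : Fin q => ε < svals A i).card := by
  rcases Nat.eq_zero_or_pos q with hq | hq
  · have : m = 0 := by omega
    subst this
    simp
  · refine Finset.card_le_card_of_injOn
      (fun j => Tuple.sort (svals A) (Fin.rev ⟨j % q, Nat.mod_lt j hq⟩)) ?_ ?_
    · intro j hj
      rw [Finset.mem_coe, Finset.mem_filter] at hj ⊢
      obtain ⟨hjm, hjlt⟩ := hj
      rw [Finset.mem_range] at hjm
      have hjq : j < q := lt_of_lt_of_le hjm hm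
      refine ⟨Finset.mem_univ _, ?_⟩
      rw [svalFun, dif_pos hjq] at hjlt
      have hmk : (⟨j % q, Nat.mod_lt j hq⟩ : Fin q) = ⟨j, hjq⟩ :=
        Fin.ext (Nat.mod_eq_of_lt hjq)
      show ε < svals A ((Tuple.sort (svals A)) (⟨j % q, Nat.mod_lt j hq⟩ : Fin q).rev)
      rw [hmk]
      exact hjlt
    · intro j1 hj1 j2 hj2 heq
      simp only [Finset.coe_filter, Set.mem_setOf_eq, Finset.mem_range] at hj1 hj2
      have h1 : j1 < q := lt_of_lt_of_le hj1.1 hm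
      have h2 : j2 < q := lt_of_lt_of_le hj2.1 hm
      have := Fin.rev_injective ((Tuple.sort (svals A)).injective heq)
      have : j1 % q = j2 % q := congrArg Fin.val this
      rwa [Nat.mod_eq_of_lt h1, Nat.mod_eq_of_lt h2] at this

end Aux

/-- if `Zₙ = Rₙ + Nₙ` with `rank Rₙ / n → 0` and `‖Nₙ‖ → 0`, then
`{Zₙ}ₙ` is zero-distributed in the sense of the singular values. -/
theorem zero_distributed_of_rank_norm_split (s t : ℕ) (hs : 0 < s) (ht : 0 < t)
    (Z R N : (n : ℕ) → Matrix (Fin (s * n)) (Fin (t * n)) ℂ)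
    (hdec : ∀ n, Z n = R n + N n)
    (hrank : Tendsto (fun n => ((R n).rank : ℝ) / n) atTop (nhds 0))
    (hnorm : Tendsto (fun n => specNorm (N n)) atTop (nhds 0)) :
    ∀ F : ℝ → ℂ, Continuous F → HasCompactSupport F →
      Tendsto (fun n => (1 / ((min s t * n : ℕ) : ℝ)) •
          ∑ j ∈ Finset.range (min s t * n), F (svalFun (Z n) j))
        atTop (nhds (F 0)) := by
  intro F hFc hFsupp
  set r := min s t with hrdef
  have hr0 : 0 < r := lt_min hs ht
  obtain ⟨C, hC⟩ : ∃ C, ∀ x, ‖F x‖ ≤ C := hFsupp.exists_bound_of_continuous hFc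
  have hC0 : 0 ≤ C := le_trans (norm_nonneg _) (hC 0)
  rw [Metric.tendsto_atTop]
  intro η hη
  obtain ⟨δ, hδ0, hδ⟩ := Metric.continuousAt_iff.mp hFc.continuousAt (η / 2) (by positivity)
  set ε := δ / 2 with hεdef
  have hε0 : 0 < ε := by positivity
  have h1 : ∀ᶠ n in atTop, specNorm (N n) < ε := hnorm.eventually (Iio_mem_nhds hε0)
  set d := η / (2 * (2 * C + 1)) with hddef
  have hd0 : 0 < d := by positivity
  have h2 : ∀ᶠ n in atTop, ((R n).rank : ℝ) / n < d := hrank.eventually (Iio_mem_nhds hd0)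
  have h3 := (h1.and h2).and (eventually_ge_atTop 1)
  rw [eventually_atTop] at h3
  obtain ⟨n0, hn0⟩ := h3
  refine ⟨n0, fun n hn => ?_⟩
  obtain ⟨⟨hNn, hRn⟩, hn1⟩ := hn0 n hn
  set m := r * n with hmdef
  have hm0 : 0 < m := Nat.mul_pos hr0 hn1
  have hmR : (0:ℝ) < m := by exact_mod_cast hm0
  have hmq : m ≤ t * n := Nat.mul_le_mul_right n (min_le_right s t)
  have hNs : ∀ i, svals (N n) i ≤ ε := fun i =>
    le_of_lt (lt_of_le_of_lt (svals_le_specNorm _ i) hNn)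
  have hcount : ((Finset.range m).filter fun j => ε < svalFun (Z n) j).card ≤ (R n).rank :=
    le_trans (card_svalFun_le (Z n) ε hmq)
      (card_lt_le_rank (Z n) (R n) (N n) (hdec n) hε0.le hNs)
  rw [dist_eq_norm]
  have key : (1 / (m:ℝ)) • ∑ j ∈ Finset.range m, F (svalFun (Z n) j) - F 0
      = (1 / (m:ℝ)) • ∑ j ∈ Finset.range m, (F (svalFun (Z n) j) - F 0) := by
    rw [Finset.sum_sub_distrib, smul_sub]
    congr 1
    rw [Finset.sum_const, Finset.card_range, ← Nat.cast_smul_eq_nsmul ℝ, smul_smul,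
      one_div, inv_mul_cancel₀ (ne_of_gt hmR), one_smul]
  rw [key]
  have hbound : ‖∑ j ∈ Finset.range m, (F (svalFun (Z n) j) - F 0)‖
      ≤ ((R n).rank : ℝ) * (2 * C) + m * (η / 2) := by
    refine le_trans (norm_sum_le _ _) ?_
    rw [← Finset.sum_filter_add_sum_filter_not (Finset.range m)
      (fun j => ε < svalFun (Z n) j)]
    have hb1 : ∑ j ∈ (Finset.range m).filter (fun j => ε < svalFun (Z n) j),
        ‖F (svalFun (Z n) j) - F 0‖ ≤ ((R n).rank : ℝ) * (2 * C) := by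
      refine le_trans (Finset.sum_le_card_nsmul _ _ (2 * C) fun j _ => ?_) ?_
      · refine le_trans (norm_sub_le _ _) ?_
        rw [two_mul]
        exact add_le_add (hC _) (hC _)
      · rw [nsmul_eq_mul]
        refine mul_le_mul_of_nonneg_right ?_ (by positivity)
        exact_mod_cast hcount
    have hb2 : ∑ j ∈ (Finset.range m).filter (fun j => ¬ ε < svalFun (Z n) j),
        ‖F (svalFun (Z n) j) - F 0‖ ≤ (m : ℝ) * (η / 2) := by
      refine le_trans (Finset.sum_le_card_nsmul _ _ (η / 2) fun j hj => ?_) ?_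
      · rw [Finset.mem_filter] at hj
        push_neg at hj
        have hle : svalFun (Z n) j ≤ ε := hj.2
        have hd : dist (svalFun (Z n) j) 0 < δ := by
          rw [Real.dist_eq, sub_zero, abs_of_nonneg (svalFun_nonneg _ _)]
          calc svalFun (Z n) j ≤ ε := hle
            _ < δ := by rw [hεdef]; linarith
        have := hδ hd
        rw [dist_eq_norm] at this
        exact this.le
      · rw [nsmul_eq_mul]
        refine mul_le_mul_of_nonneg_right ?_ (by positivity)
        exact_mod_cast le_trans (Finset.card_filter_le _ _) (le_of_eq (Finset.card_range m))
    exact add_le_add hb1 hb2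
  calc ‖(1 / (m:ℝ)) • ∑ j ∈ Finset.range m, (F (svalFun (Z n) j) - F 0)‖
      = (1 / (m:ℝ)) * ‖∑ j ∈ Finset.range m, (F (svalFun (Z n) j) - F 0)‖ := by
        rw [norm_smul, Real.norm_eq_abs, abs_of_pos (by positivity)]
    _ ≤ (1 / (m:ℝ)) * (((R n).rank : ℝ) * (2 * C) + m * (η / 2)) := by
        exact mul_le_mul_of_nonneg_left hbound (by positivity)
    _ < η := by
        have hmcast : (m : ℝ) = (r : ℝ) * n := by rw [hmdef]; push_cast; ring
        have hr1 : (1:ℝ) ≤ r := by exact_mod_cast hr0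
        have hn1R : (1:ℝ) ≤ n := by exact_mod_cast hn1
        set a := ((R n).rank : ℝ) with hadef
        have ha0 : 0 ≤ a := Nat.cast_nonneg _
        have ham : a / m ≤ d := by
          have e1 : a / m = (a / n) / r := by
            rw [hmcast, div_div]
            ring_nf
          rw [e1]
          calc (a / n) / r ≤ a / n := by
                apply div_le_self (by positivity) hr1
            _ ≤ d := hRn.le
        have hfin : a * (2 * C) / m < η / 2 := by
          have e2 : a * (2 * C) / m = (a / m) * (2 * C) := by ring
          rw [e2]
          calc (a / m) * (2 * C) ≤ d * (2 * C) :=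
                mul_le_mul_of_nonneg_right ham (by positivity)
            _ < d * (2 * C + 1) := by
                exact mul_lt_mul_of_pos_left (lt_add_one _) hd0
            _ = η / 2 := by
                rw [hddef]
                field_simp
        have e3 : (1 / (m:ℝ)) * (a * (2 * C) + m * (η / 2))
            = a * (2 * C) / m + η / 2 := by
          field_simp
        rw [e3]
        linarith
end

section
/- Let $\{A_n\}_n$ and $\{S_n\}_n$ be sequences of matrices with $A_n, S_n \in \mathbb{C}^{d_n\times d_n}$, $S_n$ invertible, such that: (i) $\{S_n - A_n\}_n$ is zero-distributed; (ii) $\|S_n^{-1}\|$ is uniformly bounded; (iii) $\|A_n\|$ and $\|S_n\|$ are uniformly bounded. Then the singular values of $S_n^{-1}A_n$ are weakly clustered at $1$: writing $S_n^{-1}A_n = I + S_n^{-1}(A_n - S_n)$, for every $\epsilon > 0$ the number of singular values of $S_n^{-1}A_n$ outside $[1-\epsilon, 1+\epsilon]$ is $o(d_n)$. -/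
open Filter Finset Matrix Topology MeasureTheory

namespace P13
variable {d : ℕ}

def en (v : Fin d → ℂ) : EuclideanSpace ℂ (Fin d) := WithLp.toLp 2 v

noncomputable def frobSq (X : Matrix (Fin d) (Fin d) ℂ) : ℝ := ∑ i, ∑ j, ‖X i j‖ ^ 2

lemma en_inner (v w : Fin d → ℂ) : inner ℂ (en v) (en w) = star v ⬝ᵥ w := by
  simp [en, PiLp.inner_apply, dotProduct, mul_comm]
lemma en_norm_sq (v : Fin d → ℂ) : ‖en v‖ ^ 2 = ∑ i, ‖v i‖ ^ 2 := by
  rw [EuclideanSpace.norm_eq, Real.sq_sqrt (by positivity)]; rfl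
lemma en_inner_mulVec (X : Matrix (Fin d) (Fin d) ℂ) (v w : Fin d → ℂ) :
    inner ℂ (en (Xᴴ *ᵥ v)) (en w) = (inner ℂ (en v) (en (X *ᵥ w)) : ℂ) := by
  rw [en_inner, en_inner, star_mulVec, conjTranspose_conjTranspose, dotProduct_mulVec]

lemma svals_nonneg (X : Matrix (Fin d) (Fin d) ℂ) (i : Fin d) : 0 ≤ svals X i :=
  Real.sqrt_nonneg _

lemma specNorm_nonneg (X : Matrix (Fin d) (Fin d) ℂ) : 0 ≤ specNorm X :=
  Real.iSup_nonneg (svals_nonneg X)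

lemma svals_le_specNorm (X : Matrix (Fin d) (Fin d) ℂ) (i : Fin d) :
    svals X i ≤ specNorm X :=
  le_ciSup (Set.Finite.bddAbove (Set.finite_range _)) i

lemma conj_mul_self (c : ℂ) : (starRingEnd ℂ) c * c = ((‖c‖ ^ 2 : ℝ) : ℂ) := by
  rw [mul_comm, Complex.mul_conj]
  norm_cast
  rw [Complex.normSq_eq_norm_sq]

lemma norm_sq_mulVec (X : Matrix (Fin d) (Fin d) ℂ) (v : Fin d → ℂ) :
    ‖en (X *ᵥ v)‖ ^ 2 = Complex.re (inner ℂ (en ((Xᴴ * X) *ᵥ v)) (en v)) := by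
  have h1 : (inner ℂ (en ((Xᴴ * X) *ᵥ v)) (en v) : ℂ) = inner ℂ (en (X *ᵥ v)) (en (X *ᵥ v)) := by
    rw [← mulVec_mulVec]; exact en_inner_mulVec X (X *ᵥ v) v
  rw [h1, ← inner_self_eq_norm_sq (𝕜 := ℂ)]
  rfl

lemma inner_quadform_le (X : Matrix (Fin d) (Fin d) ℂ) (v : Fin d → ℂ) :
    Complex.re (inner ℂ (en ((Xᴴ * X) *ᵥ v)) (en v)) ≤ specNorm X ^ 2 * ‖en v‖ ^ 2 := by
  set hG := Matrix.isHermitian_conjTranspose_mul_self X with hGdef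
  set b := hG.eigenvectorBasis with hb
  have hrepr : ∀ j, b.repr (en ((Xᴴ * X) *ᵥ v)) j = hG.eigenvalues j * b.repr (en v) j := by
    intro j
    rw [b.repr_apply_apply, b.repr_apply_apply]
    calc (inner ℂ (b j) (en ((Xᴴ * X) *ᵥ v)) : ℂ)
        = inner ℂ (en ((Xᴴ * X)ᴴ *ᵥ ⇑(b j))) (en v) := (en_inner_mulVec (Xᴴ * X) ⇑(b j) v).symm
      _ = inner ℂ (en ((Xᴴ * X) *ᵥ ⇑(b j))) (en v) := by
          rw [show (Xᴴ * X)ᴴ = Xᴴ * X from hG]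
      _ = inner ℂ (en (hG.eigenvalues j • ⇑(b j))) (en v) := by
          rw [hG.mulVec_eigenvectorBasis]
      _ = ↑(hG.eigenvalues j) * inner ℂ (b j) (en v) := by
          have h2 : en (hG.eigenvalues j • ⇑(b j)) = (hG.eigenvalues j : ℂ) • b j := by
            ext i; simp [en, Complex.real_smul]
          rw [h2, inner_smul_left, Complex.conj_ofReal]
  have hinner : (inner ℂ (en ((Xᴴ * X) *ᵥ v)) (en v) : ℂ) =
      ∑ j, (starRingEnd ℂ) (↑(hG.eigenvalues j) * b.repr (en v) j) * (b.repr (en v) j) := by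
    rw [← b.repr.inner_map_map (en ((Xᴴ * X) *ᵥ v)) (en v), PiLp.inner_apply]
    exact Finset.sum_congr rfl fun j _ => by rw [hrepr j, RCLike.inner_apply']
  rw [hinner, Complex.re_sum]
  have hnorm : ‖en v‖ ^ 2 = ∑ j, ‖b.repr (en v) j‖ ^ 2 := by
    rw [← b.repr.norm_map (en v), EuclideanSpace.norm_eq, Real.sq_sqrt (by positivity)]
  rw [hnorm, Finset.mul_sum]
  apply Finset.sum_le_sum
  intro j _
  set c := b.repr (en v) j with hc
  have h1 : ((starRingEnd ℂ) (↑(hG.eigenvalues j) * c) * c).re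
      = hG.eigenvalues j * ‖c‖ ^ 2 := by
    rw [_root_.map_mul, Complex.conj_ofReal, mul_assoc, conj_mul_self, ← Complex.ofReal_mul,
      Complex.ofReal_re]
  rw [h1]
  apply mul_le_mul_of_nonneg_right _ (by positivity)
  have h0 : 0 ≤ hG.eigenvalues j := Matrix.eigenvalues_conjTranspose_mul_self_nonneg X j
  have h3 : hG.eigenvalues j = (svals X j) ^ 2 := by
    rw [svals, Real.sq_sqrt h0]
  rw [h3]
  exact pow_le_pow_left₀ (Real.sqrt_nonneg _) (svals_le_specNorm X j) 2

lemma mulVec_norm_le (X : Matrix (Fin d) (Fin d) ℂ) (v : Fin d → ℂ) :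
    ‖en (X *ᵥ v)‖ ≤ specNorm X * ‖en v‖ := by
  have h := (norm_sq_mulVec X v).le.trans (inner_quadform_le X v)
  have h2 : ‖en (X *ᵥ v)‖ ^ 2 ≤ (specNorm X * ‖en v‖) ^ 2 := by
    rw [mul_pow]; exact h
  calc ‖en (X *ᵥ v)‖ = Real.sqrt (‖en (X *ᵥ v)‖ ^ 2) := (Real.sqrt_sq (norm_nonneg _)).symm
    _ ≤ Real.sqrt ((specNorm X * ‖en v‖) ^ 2) := Real.sqrt_le_sqrt h2
    _ = specNorm X * ‖en v‖ :=
        Real.sqrt_sq (mul_nonneg (specNorm_nonneg X) (norm_nonneg _))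

lemma specNorm_le {X : Matrix (Fin d) (Fin d) ℂ} {C : ℝ} (hC : 0 ≤ C)
    (h : ∀ v : Fin d → ℂ, ‖en (X *ᵥ v)‖ ≤ C * ‖en v‖) : specNorm X ≤ C := by
  rcases isEmpty_or_nonempty (Fin d) with hd | hd
  · rw [specNorm, Real.iSup_of_isEmpty]; exact hC
  apply ciSup_le
  intro i
  set hG := Matrix.isHermitian_conjTranspose_mul_self X with hGdef
  set b := hG.eigenvectorBasis with hb
  have h0 : 0 ≤ hG.eigenvalues i := Matrix.eigenvalues_conjTranspose_mul_self_nonneg X i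
  have hnb : ‖b i‖ = 1 := b.orthonormal.1 i
  have key : hG.eigenvalues i ≤ C ^ 2 := by
    have h1 : ‖en (X *ᵥ ⇑(b i))‖ ^ 2 = hG.eigenvalues i := by
      rw [norm_sq_mulVec]
      have h2 : en ((Xᴴ * X) *ᵥ ⇑(b i)) = (hG.eigenvalues i : ℂ) • b i := by
        rw [hG.mulVec_eigenvectorBasis]; ext k; simp [en, Complex.real_smul, hb]
      rw [h2, inner_smul_left, Complex.conj_ofReal]
      have h3 : (inner ℂ (b i) (en ⇑(b i)) : ℂ) = 1 := by
        rw [show en ⇑(b i) = b i from rfl, inner_self_eq_norm_sq_to_K, hnb]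
        norm_num
      rw [show (inner ℂ ((b i : EuclideanSpace ℂ (Fin d))) (en ⇑(b i))) = (1 : ℂ) from h3,
        mul_one, Complex.ofReal_re]
    have h2 := h ⇑(b i)
    have hnb' : ‖en ⇑(b i)‖ = 1 := hnb
    rw [hnb', mul_one] at h2
    calc hG.eigenvalues i = ‖en (X *ᵥ ⇑(b i))‖ ^ 2 := h1.symm
      _ ≤ C ^ 2 := pow_le_pow_left₀ (norm_nonneg _) h2 2
  rw [show svals X i = Real.sqrt (hG.eigenvalues i) from rfl]
  calc Real.sqrt (hG.eigenvalues i) ≤ Real.sqrt (C ^ 2) := Real.sqrt_le_sqrt key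
    _ = C := Real.sqrt_sq hC



lemma frobSq_nonneg (X : Matrix (Fin d) (Fin d) ℂ) : 0 ≤ frobSq X := by
  apply Finset.sum_nonneg; intro i _; positivity

lemma frobSq_eq_trace (X : Matrix (Fin d) (Fin d) ℂ) :
    ((Xᴴ * X).trace : ℂ) = ((frobSq X : ℝ) : ℂ) := by
  rw [trace]
  calc (∑ j, (Xᴴ * X).diag j) = ∑ j, ∑ i, ((‖X i j‖ ^ 2 : ℝ) : ℂ) := by
        apply Finset.sum_congr rfl; intro j _
        simp only [Matrix.diag, mul_apply]
        apply Finset.sum_congr rfl; intro i _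
        rw [conjTranspose_apply,
          show (star (X i j)) = (starRingEnd ℂ) (X i j) from rfl, conj_mul_self]
    _ = ((frobSq X : ℝ) : ℂ) := by rw [frobSq]; push_cast; rw [Finset.sum_comm]

lemma frobSq_sub_comm (X Y : Matrix (Fin d) (Fin d) ℂ) : frobSq (X - Y) = frobSq (Y - X) := by
  unfold frobSq
  congr 1; ext i; congr 1; ext j
  rw [show (X - Y) i j = -((Y - X) i j) by simp, norm_neg]

lemma frobSq_conjTranspose (X : Matrix (Fin d) (Fin d) ℂ) : frobSq Xᴴ = frobSq X := by
  unfold frobSq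
  rw [Finset.sum_comm]
  apply Finset.sum_congr rfl; intro i _
  apply Finset.sum_congr rfl; intro j _
  rw [conjTranspose_apply, norm_star]

lemma frobSq_add_le (X Y : Matrix (Fin d) (Fin d) ℂ) :
    frobSq (X + Y) ≤ 2 * frobSq X + 2 * frobSq Y := by
  unfold frobSq
  rw [Finset.mul_sum, Finset.mul_sum, ← Finset.sum_add_distrib]
  apply Finset.sum_le_sum; intro i _
  rw [Finset.mul_sum, Finset.mul_sum, ← Finset.sum_add_distrib]
  apply Finset.sum_le_sum; intro j _
  have h1 : ‖(X + Y) i j‖ ≤ ‖X i j‖ + ‖Y i j‖ := by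
    rw [Matrix.add_apply]; exact norm_add_le _ _
  have h2 := norm_nonneg ((X + Y) i j)
  nlinarith [sq_nonneg (‖X i j‖ - ‖Y i j‖), sq_nonneg (‖X i j‖ + ‖Y i j‖),
    norm_nonneg (X i j), norm_nonneg (Y i j)]

lemma frobSq_col (X : Matrix (Fin d) (Fin d) ℂ) :
    frobSq X = ∑ j, ‖en (fun i => X i j)‖ ^ 2 := by
  unfold frobSq
  rw [Finset.sum_comm]
  exact Finset.sum_congr rfl fun j _ => (en_norm_sq _).symm

lemma frobSq_mul_le (B X : Matrix (Fin d) (Fin d) ℂ) :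
    frobSq (B * X) ≤ specNorm B ^ 2 * frobSq X := by
  rw [frobSq_col, frobSq_col, Finset.mul_sum]
  apply Finset.sum_le_sum
  intro j _
  have h1 : (fun i => (B * X) i j) = B *ᵥ (fun i => X i j) := by
    ext i; rw [mul_apply, mulVec]; rfl
  rw [h1]
  have h2 := mulVec_norm_le B (fun i => X i j)
  calc ‖en (B *ᵥ fun i => X i j)‖ ^ 2 ≤ (specNorm B * ‖en fun i => X i j‖) ^ 2 :=
        pow_le_pow_left₀ (norm_nonneg _) h2 2
    _ = specNorm B ^ 2 * ‖en fun i => X i j‖ ^ 2 := by ring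

lemma trace_unitary_conj (U : Matrix.unitaryGroup (Fin d) ℂ) (X : Matrix (Fin d) (Fin d) ℂ) :
    ((U : Matrix (Fin d) (Fin d) ℂ) * X * star (U : Matrix (Fin d) (Fin d) ℂ)).trace
      = X.trace := by
  rw [trace_mul_cycle, U.prop.1, one_mul]

lemma trace_shift_sq {G : Matrix (Fin d) (Fin d) ℂ} (hG : G.IsHermitian) (c : ℝ) :
    (((G - (c : ℂ) • 1)ᴴ * (G - (c : ℂ) • 1)).trace : ℂ)
      = ((∑ i, (hG.eigenvalues i - c) ^ 2 : ℝ) : ℂ) := by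
  set U : Matrix (Fin d) (Fin d) ℂ := (hG.eigenvectorUnitary : Matrix (Fin d) (Fin d) ℂ) with hU
  have hUU : U * star U = 1 := (Matrix.mem_unitaryGroup_iff).mp hG.eigenvectorUnitary.2
  have hUU' : star U * U = 1 := hG.eigenvectorUnitary.prop.1
  set D : Matrix (Fin d) (Fin d) ℂ :=
    diagonal (fun i => ((hG.eigenvalues i - c : ℝ) : ℂ)) with hD
  have h1c : (c : ℂ) • (1 : Matrix (Fin d) (Fin d) ℂ) = U * ((c : ℂ) • 1) * star U := by
    rw [mul_smul_comm, mul_one, smul_mul_assoc, hUU]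
  have hdiag : diagonal (RCLike.ofReal ∘ hG.eigenvalues) - (c : ℂ) • 1 = D := by
    ext i j
    rcases eq_or_ne i j with rfl | hij
    · simp [hD, diagonal_apply_eq, Function.comp, Matrix.smul_apply, Matrix.one_apply_eq]
    · simp [hD, diagonal_apply_ne _ hij, Matrix.smul_apply, Matrix.one_apply_ne hij]
  have hGD : G - (c : ℂ) • 1 = U * D * star U := by
    conv_lhs => rw [hG.spectral_theorem, Unitary.conjStarAlgAut_apply]
    rw [← hU, h1c, ← sub_mul, ← mul_sub, hdiag]
  rw [hGD]
  have hconj : (U * D * star U)ᴴ = U * Dᴴ * star U := by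
    calc (U * D * star U)ᴴ = (star U)ᴴ * (U * D)ᴴ := conjTranspose_mul _ _
      _ = (star U)ᴴ * (Dᴴ * Uᴴ) := by rw [conjTranspose_mul]
      _ = U * Dᴴ * star U := by
          rw [← star_eq_conjTranspose (star U), star_star, ← star_eq_conjTranspose U,
            ← mul_assoc]
  rw [hconj]
  have hprod : (U * Dᴴ * star U) * (U * D * star U) = U * (Dᴴ * D) * star U := by
    have h3 : star U * (U * D * star U) = D * star U := by
      rw [← mul_assoc, ← mul_assoc, hUU', one_mul]
    rw [mul_assoc (U * Dᴴ) (star U) _, h3, ← mul_assoc, mul_assoc U Dᴴ D]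
  rw [hprod, trace_unitary_conj hG.eigenvectorUnitary]
  rw [hD, diagonal_conjTranspose, diagonal_mul_diagonal, trace_diagonal]
  rw [show ((∑ i, (hG.eigenvalues i - c) ^ 2 : ℝ) : ℂ)
      = ∑ i, (((hG.eigenvalues i - c) ^ 2 : ℝ) : ℂ) from by push_cast; rfl]
  apply Finset.sum_congr rfl
  intro i _
  rw [Pi.star_apply, RCLike.star_def, Complex.conj_ofReal]
  push_cast
  ring

lemma trace_eq_sum_eigenvalues {G : Matrix (Fin d) (Fin d) ℂ} (hG : G.IsHermitian) :
    (G.trace : ℂ) = ((∑ i, hG.eigenvalues i : ℝ) : ℂ) := by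
  conv_lhs => rw [hG.spectral_theorem, Unitary.conjStarAlgAut_apply]
  rw [trace_unitary_conj hG.eigenvectorUnitary, trace_diagonal]
  push_cast
  rfl


lemma sum_svalFun_eq {p q : ℕ} (X : Matrix (Fin p) (Fin q) ℂ) {M : Type*} [AddCommMonoid M]
    (g : ℝ → M) :
    ∑ j ∈ Finset.range q, g (svalFun X j) = ∑ i : Fin q, g (svals X i) := by
  rw [Finset.sum_range (fun j => g (svalFun X j))]
  have h1 : ∀ j : Fin q, g (svalFun X j.val) = g (svals X ((Tuple.sort (svals X)) j.rev)) := by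
    intro j
    congr 1
    rw [svalFun, dif_pos j.isLt]
  rw [Finset.sum_congr rfl (fun j _ => h1 j)]
  exact Fintype.sum_equiv ((Fin.revPerm).trans (Tuple.sort (svals X))) _ _ (fun j => rfl)

lemma count_svalFun_eq {p q : ℕ} (X : Matrix (Fin p) (Fin q) ℂ) (P : ℝ → Prop)
    [DecidablePred P] :
    ((Finset.range q).filter (fun j => P (svalFun X j))).card
      = (Finset.univ.filter (fun i : Fin q => P (svals X i))).card := by
  rw [Finset.card_filter, Finset.card_filter]
  exact sum_svalFun_eq X (fun x => if P x then 1 else 0)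

/-- test function -/
noncomputable def tf (C : ℝ) (x : ℝ) : ℝ :=
  min (x ^ 2) (C ^ 2) * max 0 (min 1 (C + 1 - |x|))

lemma tf_cont (C : ℝ) : Continuous (tf C) := by
  apply Continuous.mul
  · exact (continuous_pow 2).min continuous_const
  · exact continuous_const.max (continuous_const.min (continuous_const.sub continuous_abs))

lemma tf_nonneg (C x : ℝ) : 0 ≤ tf C x :=
  mul_nonneg (le_min (sq_nonneg x) (sq_nonneg C)) (le_max_left 0 _)

lemma tf_zero (C : ℝ) : tf C 0 = 0 := by
  have : (0:ℝ) ^ 2 = 0 := by norm_num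
  rw [tf, this, min_eq_left (sq_nonneg C), zero_mul]

lemma tf_eq {C x : ℝ} (hx0 : 0 ≤ x) (hxC : x ≤ C) : tf C x = x ^ 2 := by
  have h1 : min (x ^ 2) (C ^ 2) = x ^ 2 := min_eq_left (pow_le_pow_left₀ hx0 hxC 2)
  have h2 : max 0 (min 1 (C + 1 - |x|)) = 1 := by
    rw [abs_of_nonneg hx0, min_eq_left (by linarith)]
    exact max_eq_right zero_le_one
  rw [tf, h1, h2, mul_one]

lemma tf_supp (C : ℝ) : HasCompactSupport (fun x => ((tf C x : ℝ) : ℂ)) := by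
  apply HasCompactSupport.intro (isCompact_Icc (a := -(C + 1)) (b := C + 1))
  intro x hx
  have habs : C + 1 < |x| := by
    by_contra hcon
    push_neg at hcon
    exact hx (Set.mem_Icc.mpr (abs_le.mp hcon))
  have h1 : min 1 (C + 1 - |x|) = C + 1 - |x| := min_eq_right (by linarith)
  have h2 : max 0 (min 1 (C + 1 - |x|)) = 0 := by
    rw [h1]; exact max_eq_left (by linarith)
  show ((tf C x : ℝ) : ℂ) = 0
  rw [tf, h2, mul_zero, Complex.ofReal_zero]


lemma specNorm_conjTranspose_le {X : Matrix (Fin d) (Fin d) ℂ} {C : ℝ} (hC : 0 ≤ C)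
    (h : ∀ v : Fin d → ℂ, ‖en (X *ᵥ v)‖ ≤ C * ‖en v‖) : specNorm Xᴴ ≤ C := by
  apply specNorm_le hC
  intro v
  rcases eq_or_lt_of_le (norm_nonneg (en (Xᴴ *ᵥ v))) with hv | hv
  · rw [← hv]; positivity
  have h1 : ‖en (Xᴴ *ᵥ v)‖ ^ 2 = Complex.re (inner ℂ (en (X *ᵥ (Xᴴ *ᵥ v))) (en v)) := by
    rw [norm_sq_mulVec Xᴴ v, conjTranspose_conjTranspose, ← mulVec_mulVec]
  have hre : ∀ z : ℂ, RCLike.re z = z.re := fun _ => rfl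
  have h2 : Complex.re (inner ℂ (en (X *ᵥ (Xᴴ *ᵥ v))) (en v))
      ≤ ‖en (X *ᵥ (Xᴴ *ᵥ v))‖ * ‖en v‖ := by
    rw [← hre]; exact re_inner_le_norm _ _
  have h3 : ‖en (X *ᵥ (Xᴴ *ᵥ v))‖ ≤ C * ‖en (Xᴴ *ᵥ v)‖ := h _
  have h4 : ‖en (Xᴴ *ᵥ v)‖ ^ 2 ≤ C * ‖en (Xᴴ *ᵥ v)‖ * ‖en v‖ := by
    rw [h1]
    exact h2.trans (mul_le_mul_of_nonneg_right h3 (norm_nonneg _))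
  nlinarith [norm_nonneg (en v)]

/-- main counting bound -/
lemma key_bound {q : ℕ} (Mn : Matrix (Fin q) (Fin q) ℂ) {ε CM : ℝ} (hε : 0 < ε)
    (hM : specNorm Mnᴴ ≤ CM) :
    ε ^ 2 * ((Finset.univ.filter (fun i : Fin q => ε < |svals Mn i - 1|)).card : ℝ)
      ≤ (2 * CM ^ 2 + 2) * frobSq (Mn - 1) := by
  set hG := Matrix.isHermitian_conjTranspose_mul_self Mn with hGdef
  have step1 : ε ^ 2 * ((Finset.univ.filter (fun i : Fin q => ε < |svals Mn i - 1|)).card : ℝ)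
      ≤ ∑ i, (hG.eigenvalues i - 1) ^ 2 := by
    have hsub : ∑ i ∈ Finset.univ.filter (fun i : Fin q => ε < |svals Mn i - 1|),
        (hG.eigenvalues i - 1) ^ 2 ≤ ∑ i, (hG.eigenvalues i - 1) ^ 2 :=
      Finset.sum_le_sum_of_subset_of_nonneg (Finset.filter_subset _ _)
        (fun i _ _ => sq_nonneg _)
    refine le_trans ?_ hsub
    have hptwise : ∀ i ∈ Finset.univ.filter (fun i : Fin q => ε < |svals Mn i - 1|),
        ε ^ 2 ≤ (hG.eigenvalues i - 1) ^ 2 := by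
      intro i hi
      have hi' : ε < |svals Mn i - 1| := (Finset.mem_filter.mp hi).2
      set lam := hG.eigenvalues i with hlam
      have hlam0 : 0 ≤ lam := Matrix.eigenvalues_conjTranspose_mul_self_nonneg Mn i
      have hs : Real.sqrt lam ^ 2 = lam := Real.sq_sqrt hlam0
      set s := Real.sqrt lam with hsdef
      have hs0 : 0 ≤ s := Real.sqrt_nonneg _
      have h2 : |lam - 1| = |s - 1| * (s + 1) := by
        rw [← hs, show s ^ 2 - 1 = (s - 1) * (s + 1) by ring, abs_mul,
          abs_of_nonneg (show (0:ℝ) ≤ s + 1 by linarith)]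
      have h3 : ε < |lam - 1| := by
        refine lt_of_lt_of_le hi' ?_
        rw [h2]
        exact le_mul_of_one_le_right (abs_nonneg _) (by linarith)
      calc ε ^ 2 ≤ |lam - 1| ^ 2 := pow_le_pow_left₀ hε.le h3.le 2
        _ = (lam - 1) ^ 2 := sq_abs _
    have hcard := Finset.card_nsmul_le_sum
      (Finset.univ.filter (fun i : Fin q => ε < |svals Mn i - 1|))
      (fun i => (hG.eigenvalues i - 1) ^ 2) (ε ^ 2) hptwise
    rw [nsmul_eq_mul] at hcard
    calc ε ^ 2 * ((Finset.univ.filter (fun i : Fin q => ε < |svals Mn i - 1|)).card : ℝ)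
        = ((Finset.univ.filter (fun i : Fin q => ε < |svals Mn i - 1|)).card : ℝ) * ε ^ 2 :=
          mul_comm _ _
      _ ≤ _ := hcard
  have step2 : ∑ i, (hG.eigenvalues i - 1) ^ 2 = frobSq (Mnᴴ * Mn - 1) := by
    have h1 := trace_shift_sq hG 1
    simp only [Complex.ofReal_one, one_smul] at h1
    have h2 := frobSq_eq_trace (Mnᴴ * Mn - 1)
    have h3 := h1.symm.trans h2
    exact_mod_cast h3
  have step3 : frobSq (Mnᴴ * Mn - 1) ≤ (2 * CM ^ 2 + 2) * frobSq (Mn - 1) := by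
    have hdec : Mnᴴ * Mn - 1 = Mnᴴ * (Mn - 1) + (Mn - 1)ᴴ := by
      rw [conjTranspose_sub, conjTranspose_one, mul_sub, mul_one]
      noncomm_ring
    rw [hdec]
    have h1 := frobSq_add_le (Mnᴴ * (Mn - 1)) ((Mn - 1)ᴴ)
    have h2 := frobSq_mul_le Mnᴴ (Mn - 1)
    have h3 := frobSq_conjTranspose (Mn - 1)
    have h4 : specNorm Mnᴴ ^ 2 ≤ CM ^ 2 := pow_le_pow_left₀ (specNorm_nonneg _) hM 2
    have h5 := frobSq_nonneg (Mn - 1)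
    nlinarith
  rw [step2] at step1
  exact step1.trans step3

lemma inv_mul_sub {q : ℕ} (Sn An : Matrix (Fin q) (Fin q) ℂ) (h : IsUnit Sn) :
    Sn⁻¹ * (An - Sn) = Sn⁻¹ * An - 1 := by
  rw [Matrix.mul_sub, Matrix.nonsing_inv_mul _ ((Matrix.isUnit_iff_isUnit_det _).mp h)]

end P13

/-- if `{Sₙ - Aₙ}ₙ` is zero-distributed, `Sₙ` is invertible and
`‖Sₙ⁻¹‖, ‖Aₙ‖, ‖Sₙ‖` are uniformly bounded, then the singular values of
`Sₙ⁻¹ Aₙ` are weakly clustered at `1`. -/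
theorem precond_singular_values_cluster_one (d : ℕ → ℕ)
    (hd : Tendsto d atTop atTop)
    (A S : (n : ℕ) → Matrix (Fin (d n)) (Fin (d n)) ℂ)
    (hinv : ∀ n, IsUnit (S n))
    (hzd : ∀ F : ℝ → ℂ, Continuous F → HasCompactSupport F →
      Tendsto (fun n => (1 / (d n : ℝ)) •
          ∑ j ∈ Finset.range (d n), F (svalFun (S n - A n) j))
        atTop (nhds (F 0)))
    (hSinv : ∃ C : ℝ, ∀ n, specNorm ((S n)⁻¹) ≤ C)
    (hAb : ∃ C : ℝ, ∀ n, specNorm (A n) ≤ C)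
    (hSb : ∃ C : ℝ, ∀ n, specNorm (S n) ≤ C) :
    ∀ ε : ℝ, 0 < ε →
      Tendsto (fun n =>
          (((Finset.range (d n)).filter
              (fun j => ε < |svalFun ((S n)⁻¹ * A n) j - 1|)).card : ℝ) / d n)
        atTop (nhds 0) := by
  obtain ⟨C1, hC1⟩ := hSinv
  obtain ⟨C2, hC2⟩ := hAb
  obtain ⟨C3, hC3⟩ := hSb
  intro ε hε
  have hC1n : 0 ≤ C1 := le_trans (P13.specNorm_nonneg _) (hC1 0)
  have hC2n : 0 ≤ C2 := le_trans (P13.specNorm_nonneg _) (hC2 0)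
  have hC3n : 0 ≤ C3 := le_trans (P13.specNorm_nonneg _) (hC3 0)
  set CZ := C3 + C2 with hCZ
  set CM := C1 * C2 with hCM
  set K := ((2 * CM ^ 2 + 2) * C1 ^ 2) / ε ^ 2 with hK
  have hKn : 0 ≤ K := by positivity
  set x : ℕ → ℝ := fun n =>
    (1 / (d n : ℝ)) * ∑ j ∈ Finset.range (d n), P13.tf CZ (svalFun (S n - A n) j) with hx
  -- limit of the test-function averages
  have hF := hzd (fun t => ((P13.tf CZ t : ℝ) : ℂ))
    (Complex.continuous_ofReal.comp (P13.tf_cont CZ)) (P13.tf_supp CZ)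
  simp only [P13.tf_zero, Complex.ofReal_zero] at hF
  have hsmul : (fun n => (1 / (d n : ℝ)) •
      ∑ j ∈ Finset.range (d n), ((P13.tf CZ (svalFun (S n - A n) j) : ℝ) : ℂ))
      = fun n => ((x n : ℝ) : ℂ) := by
    funext n
    rw [hx, Complex.real_smul]
    push_cast
    ring
  rw [hsmul] at hF
  have hxlim : Tendsto x atTop (nhds 0) := by
    have h1 := (Complex.continuous_re.tendsto (0 : ℂ)).comp hF
    simpa [Function.comp_def] using h1
  -- pointwise bound
  have hmain : ∀ n, (((Finset.range (d n)).filter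
      (fun j => ε < |svalFun ((S n)⁻¹ * A n) j - 1|)).card : ℝ) / d n ≤ K * x n := by
    intro n
    set Mn := (S n)⁻¹ * A n with hMn
    set Zn := S n - A n with hZn
    have hcard : ((Finset.range (d n)).filter (fun j => ε < |svalFun Mn j - 1|)).card
        = (Finset.univ.filter (fun i : Fin (d n) => ε < |svals Mn i - 1|)).card :=
      P13.count_svalFun_eq Mn (fun t => ε < |t - 1|)
    have hMop : ∀ v : Fin (d n) → ℂ, ‖P13.en (Mn *ᵥ v)‖ ≤ CM * ‖P13.en v‖ := by
      intro v
      rw [hMn, show ((S n)⁻¹ * A n) *ᵥ v = (S n)⁻¹ *ᵥ (A n *ᵥ v) from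
        (mulVec_mulVec _ _ _).symm]
      calc ‖P13.en ((S n)⁻¹ *ᵥ (A n *ᵥ v))‖
          ≤ specNorm ((S n)⁻¹) * ‖P13.en (A n *ᵥ v)‖ := P13.mulVec_norm_le _ _
        _ ≤ C1 * (specNorm (A n) * ‖P13.en v‖) :=
            mul_le_mul (hC1 n) (P13.mulVec_norm_le _ _) (norm_nonneg _) hC1n
        _ ≤ C1 * (C2 * ‖P13.en v‖) := by
            apply mul_le_mul_of_nonneg_left _ hC1n
            exact mul_le_mul_of_nonneg_right (hC2 n) (norm_nonneg _)
        _ = CM * ‖P13.en v‖ := by rw [hCM]; ring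
    have hMH : specNorm Mnᴴ ≤ CM := P13.specNorm_conjTranspose_le (by positivity) hMop
    have hkey := P13.key_bound Mn hε hMH
    have hE : Mn - 1 = (S n)⁻¹ * (A n - S n) := (P13.inv_mul_sub (S n) (A n) (hinv n)).symm
    have hfE : P13.frobSq (Mn - 1) ≤ C1 ^ 2 * P13.frobSq Zn := by
      rw [hE]
      calc P13.frobSq ((S n)⁻¹ * (A n - S n))
          ≤ specNorm ((S n)⁻¹) ^ 2 * P13.frobSq (A n - S n) := P13.frobSq_mul_le _ _
        _ ≤ C1 ^ 2 * P13.frobSq (A n - S n) :=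
            mul_le_mul_of_nonneg_right
              (pow_le_pow_left₀ (P13.specNorm_nonneg _) (hC1 n) 2) (P13.frobSq_nonneg _)
        _ = C1 ^ 2 * P13.frobSq Zn := by rw [P13.frobSq_sub_comm, hZn]
    have hZspec : specNorm Zn ≤ CZ := by
      apply P13.specNorm_le (by positivity)
      intro v
      rw [hZn, show (S n - A n) *ᵥ v = S n *ᵥ v - A n *ᵥ v from Matrix.sub_mulVec _ _ _]
      calc ‖P13.en (S n *ᵥ v - A n *ᵥ v)‖
          = ‖P13.en (S n *ᵥ v) - P13.en (A n *ᵥ v)‖ := rfl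
        _ ≤ ‖P13.en (S n *ᵥ v)‖ + ‖P13.en (A n *ᵥ v)‖ := norm_sub_le _ _
        _ ≤ specNorm (S n) * ‖P13.en v‖ + specNorm (A n) * ‖P13.en v‖ :=
            add_le_add (P13.mulVec_norm_le _ _) (P13.mulVec_norm_le _ _)
        _ ≤ C3 * ‖P13.en v‖ + C2 * ‖P13.en v‖ :=
            add_le_add (mul_le_mul_of_nonneg_right (hC3 n) (norm_nonneg _))
              (mul_le_mul_of_nonneg_right (hC2 n) (norm_nonneg _))
        _ = CZ * ‖P13.en v‖ := by rw [hCZ]; ring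
    have hfZ : P13.frobSq Zn = ∑ j ∈ Finset.range (d n), P13.tf CZ (svalFun Zn j) := by
      have h1 := P13.frobSq_eq_trace Zn
      have h2 := P13.trace_eq_sum_eigenvalues (isHermitian_conjTranspose_mul_self Zn)
      have h3 : P13.frobSq Zn = ∑ i, (isHermitian_conjTranspose_mul_self Zn).eigenvalues i := by
        exact_mod_cast h1.symm.trans h2
      rw [P13.sum_svalFun_eq Zn (P13.tf CZ), h3]
      apply Finset.sum_congr rfl
      intro i _
      rw [P13.tf_eq (P13.svals_nonneg Zn i) (le_trans (P13.svals_le_specNorm Zn i) hZspec)]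
      rw [svals, Real.sq_sqrt (Matrix.eigenvalues_conjTranspose_mul_self_nonneg Zn i)]
    set T := ∑ j ∈ Finset.range (d n), P13.tf CZ (svalFun Zn j) with hT
    have hT0 : 0 ≤ T := Finset.sum_nonneg fun j _ => P13.tf_nonneg CZ _
    have hcount : (((Finset.range (d n)).filter
        (fun j => ε < |svalFun Mn j - 1|)).card : ℝ) ≤ K * T := by
      rw [hcard]
      rw [show K * T = ((2 * CM ^ 2 + 2) * (C1 ^ 2 * T)) / ε ^ 2 from by rw [hK]; ring]
      rw [le_div_iff₀ (by positivity)]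
      calc ((Finset.univ.filter (fun i : Fin (d n) => ε < |svals Mn i - 1|)).card : ℝ) * ε ^ 2
          = ε ^ 2 * ((Finset.univ.filter
              (fun i : Fin (d n) => ε < |svals Mn i - 1|)).card : ℝ) := mul_comm _ _
        _ ≤ (2 * CM ^ 2 + 2) * P13.frobSq (Mn - 1) := hkey
        _ ≤ (2 * CM ^ 2 + 2) * (C1 ^ 2 * T) := by
            apply mul_le_mul_of_nonneg_left _ (by positivity)
            rw [← hfZ]
            exact hfE
    have hxn : x n = (1 / (d n : ℝ)) * T := rfl
    calc (((Finset.range (d n)).filter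
          (fun j => ε < |svalFun Mn j - 1|)).card : ℝ) / d n
        = (((Finset.range (d n)).filter
            (fun j => ε < |svalFun Mn j - 1|)).card : ℝ) * (1 / (d n : ℝ)) := by
          rw [div_eq_mul_one_div]
      _ ≤ (K * T) * (1 / (d n : ℝ)) := mul_le_mul_of_nonneg_right hcount (by positivity)
      _ = K * x n := by rw [hxn]; ring
  apply squeeze_zero (fun n => by positivity) hmain
  have hfin := hxlim.const_mul K
  rw [mul_zero] at hfin
  exact hfin
end
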